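/- Let (X, Y) be a complete hereditary cotorsion pair in an abelian category A, let A be an object of A, and let n ≥ 1 be an integer. If A has X-resolution dimension at most n, then for any special proper X-resolution ⋯ → X_1 → X_0 → A → 0 (i.e., an X-resolution in which every kernel K_i = Ker(X_i → X_{i-1}) lies in Y = X^⊥, with X_{-1} = A), the kernel K_{n-1} = Ker(X_{n-1} → X_{n-2}) belongs to X. -/
import Mathlib


open CategoryTheory Limits

universe w v u

namespace PaperAB

variable {C : Type u} [Category.{v} C] [Abelian C] [HasExt.{w} C]

/-- Vanishing of `Ext^n(A, B)`. -/
def extZero (A B : C) (n : ℕ) : Prop := Subsingleton (Abelian.Ext A B n)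

/-- The right `Ext^1`-orthogonal class of a class `𝒳`. -/
def rightOrth (𝒳 : C → Prop) : C → Prop := fun B => ∀ A, 𝒳 A → extZero A B 1

/-- The left `Ext^1`-orthogonal class of a class `𝒴`. -/
def leftOrth (𝒴 : C → Prop) : C → Prop := fun A => ∀ B, 𝒴 B → extZero A B 1

/-- `f, g` form a short exact sequence `0 → A → B → D → 0`. -/
def IsSES {A B D : C} (f : A ⟶ B) (g : B ⟶ D) : Prop :=
  ∃ (zero : f ≫ g = 0), (ShortComplex.mk f g zero).ShortExact

/-- `(𝒳, 𝒴)` is a cotorsion pair. -/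
structure CotorsionPair (𝒳 𝒴 : C → Prop) : Prop where
  eqLeft : ∀ A, 𝒳 A ↔ leftOrth 𝒴 A
  eqRight : ∀ B, 𝒴 B ↔ rightOrth 𝒳 B

/-- Completeness of a pair of classes `(𝒳, 𝒴)`: every object admits a special
`𝒳`-precover and a special `𝒴`-preenvelope. -/
def Complete (𝒳 𝒴 : C → Prop) : Prop :=
  ∀ A : C,
    (∃ (Y X : C) (f : Y ⟶ X) (g : X ⟶ A), IsSES f g ∧ 𝒳 X ∧ 𝒴 Y) ∧
    (∃ (Y X : C) (f : A ⟶ Y) (g : Y ⟶ X), IsSES f g ∧ 𝒴 Y ∧ 𝒳 X)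

/-- Heredity: `Ext^n(𝒳, 𝒴) = 0` for all `n ≥ 1`. -/
def Hereditary (𝒳 𝒴 : C → Prop) : Prop :=
  ∀ A B, 𝒳 A → 𝒴 B → ∀ n, 1 ≤ n → extZero A B n

/-- Complete hereditary cotorsion pair. -/
structure CHCP (𝒳 𝒴 : C → Prop) : Prop where
  cotorsion : CotorsionPair 𝒳 𝒴
  complete : Complete 𝒳 𝒴
  hereditary : Hereditary 𝒳 𝒴

/-- `ResDimLE 𝒳 A n` : there exists an exact sequence
`0 → X n → ⋯ → X 0 → A → 0` with all `X i ∈ 𝒳`. -/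
def ResDimLE (𝒳 : C → Prop) (A : C) (n : ℕ) : Prop :=
  ∃ (X : ℕ → C) (d : ∀ i, X (i + 1) ⟶ X i) (ε : X 0 ⟶ A),
    (∀ i, i ≤ n → 𝒳 (X i)) ∧ (∀ i, n < i → IsZero (X i)) ∧ Epi ε ∧
    (∃ (zero : d 0 ≫ ε = 0), (ShortComplex.mk (d 0) ε zero).Exact) ∧
    (∀ i, ∃ (zero : d (i + 1) ≫ d i = 0),
      (ShortComplex.mk (d (i + 1)) (d i) zero).Exact)

/-- Objects of finite `𝒳`-resolution dimension (the class `X̂`). -/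
def FinResDim (𝒳 : C → Prop) (A : C) : Prop := ∃ n, ResDimLE 𝒳 A n

/-- The `𝒳`-resolution dimension of `A`, in `ℕ∞`. -/
noncomputable def ResDim (𝒳 : C → Prop) (A : C) : ℕ∞ :=
  sInf {m : ℕ∞ | ∃ n : ℕ, m = (n : ℕ∞) ∧ ResDimLE 𝒳 A n}

/-- The intersection of two classes. -/
def Inter (𝒳 𝒴 : C → Prop) : C → Prop := fun A => 𝒳 A ∧ 𝒴 A

def ClosedUnderExtensions (𝒲 : C → Prop) : Prop :=
  ∀ ⦃A B D : C⦄ (f : A ⟶ B) (g : B ⟶ D), IsSES f g → 𝒲 A → 𝒲 D → 𝒲 B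

def ClosedUnderKernels (𝒲 : C → Prop) : Prop :=
  ∀ ⦃A B D : C⦄ (f : A ⟶ B) (g : B ⟶ D), IsSES f g → 𝒲 B → 𝒲 D → 𝒲 A

def ClosedUnderCokernels (𝒲 : C → Prop) : Prop :=
  ∀ ⦃A B D : C⦄ (f : A ⟶ B) (g : B ⟶ D), IsSES f g → 𝒲 A → 𝒲 B → 𝒲 D

def ClosedUnderSummands (𝒲 : C → Prop) : Prop :=
  ∀ ⦃A B : C⦄ (i : A ⟶ B) (p : B ⟶ A), i ≫ p = 𝟙 A → 𝒲 B → 𝒲 A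

/-- A class is thick if it is closed under direct summands and has the
two-out-of-three property on short exact sequences. -/
def IsThick (𝒲 : C → Prop) : Prop :=
  ClosedUnderSummands 𝒲 ∧ ClosedUnderExtensions 𝒲 ∧
    ClosedUnderKernels 𝒲 ∧ ClosedUnderCokernels 𝒲

/-- A class is left thick if it is closed under direct summands, extensions and
kernels of epimorphisms. -/
def LeftThick (𝒲 : C → Prop) : Prop :=
  ClosedUnderSummands 𝒲 ∧ ClosedUnderExtensions 𝒲 ∧ ClosedUnderKernels 𝒲

/-- A class is right thick if it is closed under direct summands, extensions and
cokernels of monomorphisms. -/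
def RightThick (𝒲 : C → Prop) : Prop :=
  ClosedUnderSummands 𝒲 ∧ ClosedUnderExtensions 𝒲 ∧ ClosedUnderCokernels 𝒲

/-- `ω` is a cogenerator for `𝒳`. -/
def IsCogeneratorFor (ω 𝒳 : C → Prop) : Prop :=
  (∀ A, ω A → 𝒳 A) ∧
  ∀ A, 𝒳 A → ∃ (W A' : C) (f : A ⟶ W) (g : W ⟶ A'), IsSES f g ∧ ω W ∧ 𝒳 A'

/-- `ω` is an injective cogenerator for `𝒳`. -/
def IsInjCogeneratorFor (ω 𝒳 : C → Prop) : Prop :=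
  IsCogeneratorFor ω 𝒳 ∧ ∀ A W, 𝒳 A → ω W → ∀ n, 1 ≤ n → extZero A W n

/-- A left weak Auslander–Buchweitz context `(𝒳, 𝒴, ω)`. -/
structure LeftWeakABContext (𝒳 𝒴 ω : C → Prop) : Prop where
  ab1 : LeftThick 𝒳
  ab2 : RightThick 𝒴
  ab2' : ∀ A, 𝒴 A → FinResDim 𝒳 A
  ab3 : (∀ A, ω A ↔ 𝒳 A ∧ 𝒴 A) ∧ IsInjCogeneratorFor ω 𝒳

/-- A left Auslander–Buchweitz context: a left weak AB-context in which every
object has finite `𝒳`-resolution dimension. -/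
structure LeftABContext (𝒳 𝒴 ω : C → Prop) extends LeftWeakABContext 𝒳 𝒴 ω : Prop where
  hat_all : ∀ A : C, FinResDim 𝒳 A

end PaperAB

namespace PaperAB

open Abelian

variable {C : Type u} [Category.{v} C] [Abelian C] [HasExt.{w} C]

lemma extZero_of_all_eq_zero {A B : C} {n : ℕ} (h : ∀ x : Abelian.Ext A B n, x = 0) :
    extZero A B n :=
  ⟨fun x y => by rw [h x, h y]⟩

lemma extZero.eq_zero {A B : C} {n : ℕ} (h : extZero A B n) (x : Abelian.Ext A B n) : x = 0 :=
  @Subsingleton.elim _ h x 0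

/-- Dimension shifting, "downward" direction: from vanishing at the kernel to the cokernel. -/
lemma ext3_of_ses {S : ShortComplex C} (hS : S.ShortExact) (B : C) {n₀ n₁ : ℕ}
    (h : 1 + n₀ = n₁) (h1 : extZero S.X₁ B n₀) (h2 : extZero S.X₂ B n₁) :
    extZero S.X₃ B n₁ := by
  apply extZero_of_all_eq_zero
  intro z
  obtain ⟨x₁, hx₁⟩ := Ext.contravariant_sequence_exact₃ hS B z (h2.eq_zero _) h
  rw [← hx₁, h1.eq_zero x₁, Ext.comp_zero]

/-- Dimension shifting, "upward" direction: from vanishing at the cokernel to the kernel. -/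
lemma ext1_of_ses {S : ShortComplex C} (hS : S.ShortExact) (B : C) {n₀ n₁ : ℕ}
    (h : 1 + n₀ = n₁) (h2 : extZero S.X₂ B n₀) (h3 : extZero S.X₃ B n₁) :
    extZero S.X₁ B n₀ := by
  apply extZero_of_all_eq_zero
  intro x₁
  obtain ⟨x₂, hx₂⟩ := Ext.contravariant_sequence_exact₁ hS B x₁ h (h3.eq_zero _)
  rw [← hx₂, h2.eq_zero x₂, Ext.comp_zero]

/-- Transfer of `extZero` along an isomorphism in the first variable. -/
lemma extZero_of_iso {A A' B : C} (e : A' ≅ A) {n : ℕ} (h : extZero A' B n) :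
    extZero A B n := by
  apply extZero_of_all_eq_zero
  intro z
  have : (Ext.mk₀ e.inv).comp ((Ext.mk₀ e.hom).comp z (zero_add n)) (zero_add n) = z := by
    rw [Ext.mk₀_comp_mk₀_assoc, e.inv_hom_id, Ext.mk₀_id_comp]
  rw [← this, h.eq_zero ((Ext.mk₀ e.hom).comp z (zero_add n)), Ext.comp_zero]

/-- If `M` has `𝒳`-resolution dimension at most `n`, then `Ext^m(M, B) = 0` for every
`B ∈ 𝒴` and every `m ≥ n + 1`. -/
lemma resdim_ext_vanish {𝒳 𝒴 : C → Prop} (hher : Hereditary 𝒳 𝒴) :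
    ∀ (n : ℕ) (M : C), ResDimLE 𝒳 M n → ∀ B, 𝒴 B → ∀ m, n + 1 ≤ m → extZero M B m := by
  intro n
  induction n with
  | zero =>
    rintro M ⟨X, d, ε, hXmem, hXzero, hepi, ⟨z0, hex0⟩, _⟩ B hB m hm
    have hd0 : d 0 = 0 := (hXzero 1 (by omega)).eq_of_src _ _
    have : Mono ε := hex0.mono_g hd0
    have : IsIso ε := isIso_of_mono_of_epi ε
    exact extZero_of_iso (asIso ε) (hher _ _ (hXmem 0 le_rfl) hB m (by omega))
  | succ n ih =>
    rintro M ⟨X, d, ε, hXmem, hXzero, hepi, ⟨z0, hex0⟩, hexi⟩ B hB m hm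
    -- the first syzygy
    set K := Abelian.image (d 0) with _hK
    have hfac : Abelian.factorThruImage (d 0) ≫ Abelian.image.ι (d 0) = d 0 :=
      Abelian.image.fac (d 0)
    have hz1 : Abelian.image.ι (d 0) ≫ ε = 0 := by
      rw [← cancel_epi (Abelian.factorThruImage (d 0)), reassoc_of% hfac, z0, comp_zero]
    -- the short exact sequence 0 → K → X 0 → M → 0
    have hSES : (ShortComplex.mk (Abelian.image.ι (d 0)) ε hz1).ShortExact := by
      refine ⟨?_⟩
      · let φ : ShortComplex.mk (d 0) ε z0 ⟶ ShortComplex.mk (Abelian.image.ι (d 0)) ε hz1 :=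
          { τ₁ := Abelian.factorThruImage (d 0)
            τ₂ := 𝟙 _
            τ₃ := 𝟙 _
            comm₁₂ := by simpa using hfac.symm
            comm₂₃ := by simp }
        haveI : Epi φ.τ₁ := by simp only [φ]; infer_instance
        haveI : IsIso φ.τ₂ := by simp only [φ]; infer_instance
        haveI : Mono φ.τ₃ := by simp only [φ]; infer_instance
        exact (ShortComplex.exact_iff_of_epi_of_isIso_of_mono φ).1 hex0
    -- K has 𝒳-resolution dimension at most n
    have hKres : ResDimLE 𝒳 K n := by
      refine ⟨fun i => X (i + 1), fun i => d (i + 1), Abelian.factorThruImage (d 0),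
        fun i hi => hXmem (i + 1) (by omega), fun i hi => hXzero (i + 1) (by omega),
        inferInstance, ?_, fun i => hexi (i + 1)⟩
      have hz2 : d 1 ≫ Abelian.factorThruImage (d 0) = 0 := by
        rw [← cancel_mono (Abelian.image.ι (d 0)), Category.assoc, hfac, zero_comp]
        exact (hexi 0).choose
      refine ⟨hz2, ?_⟩
      let φ : ShortComplex.mk (d 1) (Abelian.factorThruImage (d 0)) hz2 ⟶
          ShortComplex.mk (d 1) (d 0) (hexi 0).choose :=
        { τ₁ := 𝟙 _
          τ₂ := 𝟙 _
          τ₃ := Abelian.image.ι (d 0)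
          comm₁₂ := by simp
          comm₂₃ := by simpa using hfac }
      haveI : Epi φ.τ₁ := by simp only [φ]; infer_instance
      haveI : IsIso φ.τ₂ := by simp only [φ]; infer_instance
      haveI : Mono φ.τ₃ := by simp only [φ]; infer_instance
      exact (ShortComplex.exact_iff_of_epi_of_isIso_of_mono φ).2 (hexi 0).choose_spec
    -- conclude by dimension shifting along the short exact sequence
    have h1m : 1 + (m - 1) = m := by omega
    exact ext3_of_ses hSES B h1m (ih K hKres B hB (m - 1) (by omega))
      (hher _ _ (hXmem 0 (by omega)) hB m (by omega))

/-- If `(𝒳, 𝒴)` is a complete hereditary cotorsion pair, `A` has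
`𝒳`-resolution dimension at most `n ≥ 1`, then for any special proper
`𝒳`-resolution of `A` (with syzygies `K i ∈ 𝒴`), the syzygy `K (n-1)` lies in `𝒳`. -/
theorem statement0 {C : Type u} [Category.{v} C] [Abelian C] [HasExt.{w} C]
    {𝒳 𝒴 : C → Prop} (h : CHCP 𝒳 𝒴) (A : C) (n : ℕ) (hn : 1 ≤ n)
    (hdim : ResDimLE 𝒳 A n) (X K : ℕ → C)
    (hX : ∀ i, 𝒳 (X i)) (hK : ∀ i, 𝒴 (K i))
    (h0 : ∃ (f : K 0 ⟶ X 0) (g : X 0 ⟶ A), IsSES f g)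
    (hi : ∀ i, ∃ (f : K (i + 1) ⟶ X (i + 1)) (g : X (i + 1) ⟶ K i), IsSES f g) :
    𝒳 (K (n - 1)) := by
  rw [h.cotorsion.eqLeft]
  intro B hB
  have hA : extZero A B (n + 1) := resdim_ext_vanish h.hereditary n A hdim B hB (n + 1) le_rfl
  -- by induction, `Ext^(n-i)(K i, B) = 0` for all `i + 1 ≤ n`
  have key : ∀ i, i + 1 ≤ n → extZero (K i) B (n - i) := by
    intro i
    induction i with
    | zero =>
      intro _
      obtain ⟨f, g, zero, hses⟩ := h0
      have := ext1_of_ses hses B (show 1 + n = n + 1 by omega)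
        (h.hereditary _ _ (hX 0) hB n hn) hA
      simpa using this
    | succ i ih =>
      intro hin
      obtain ⟨f, g, zero, hses⟩ := hi i
      have hKi : extZero (K i) B (n - i) := ih (by omega)
      exact ext1_of_ses hses B (show 1 + (n - (i + 1)) = n - i by omega)
        (h.hereditary _ _ (hX (i + 1)) hB (n - (i + 1)) (by omega)) hKi
  have := key (n - 1) (by omega)
  have heq : n - (n - 1) = 1 := by omega
  rwa [heq] at this

end PaperAB
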